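/- Let a, b ≥ 2 be integers. Take R = ℂ[u_0,…,u_{a−1}][u_a, u_a^{−1}] (a ℚ-algebra) with u_0, …, u_a the standard generators, and define v_m(Y) ∈ R[Y] by the recursion in the context. Then for every integer m ≥ 0, the polynomial (−1)^m · m! · v_m(Y) is (bm+1)-triangular of degree (ab−1)m + a. -/

import Mathlib

open Polynomial

noncomputable section

/-- The ring `R = ℂ[u₀,…,u_{a−1}][u_a, u_a⁻¹]`: Laurent polynomials in `u_a`
over the polynomial ring `ℂ[u₀,…,u_{a−1}]`. -/
abbrev LaurentRing (a : ℕ) : Type := LaurentPolynomial (MvPolynomial (Fin a) ℂ)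

/-- The generators `u_0, …, u_a` of `R`; `u i` for `i < a` is the polynomial variable `u_i`,
and `u a` is the Laurent variable `u_a`. -/
noncomputable def u (a : ℕ) (i : ℕ) : LaurentRing a :=
  if h : i < a then LaurentPolynomial.C (MvPolynomial.X (⟨i, h⟩ : Fin a))
  else LaurentPolynomial.T 1

/-- `P ∈ R[Y]` is `m`-triangular of degree `d` if `deg P = d ≥ a` and for `d − a ≤ l ≤ d`
one has `p_l = q_l u_a^{m−1} u_{a−d+l} + P_l` with `q_l ∈ ℚ`, `q_l > 0`, and
`P_l ∈ ℂ[u_{a−d+l+1},…,u_a]`; for `l = d` this means `p_d = q_d u_a^m`. -/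
def IsTriangular (a m d : ℕ) (P : Polynomial (LaurentRing a)) : Prop :=
  P.natDegree = d ∧ a ≤ d ∧
  (∃ q : ℚ, 0 < q ∧ P.coeff d = algebraMap ℚ (LaurentRing a) q * (u a a) ^ m) ∧
  (∀ l, d - a ≤ l → l < d →
    ∃ (q : ℚ) (Pl : LaurentRing a), 0 < q ∧
      Pl ∈ Algebra.adjoin ℂ (u a '' {i : ℕ | a - (d - l) + 1 ≤ i ∧ i ≤ a}) ∧
      P.coeff l = algebraMap ℚ (LaurentRing a) q *
        ((u a a) ^ (m - 1) * u a (a - (d - l))) + Pl)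


/-- The polynomial `U(Y) = Σ_{j=0}^{a} u_j Y^j ∈ R[Y]`. -/
noncomputable def Upoly (a : ℕ) : Polynomial (LaurentRing a) :=
  ∑ j ∈ Finset.range (a + 1), Polynomial.C (u a j) * Polynomial.X ^ j

/-- The polynomials `v_m`: `v_0 = U` and
`v_m = −Σ_{j=1}^{m} (U^{bj}/j!)·v_{m−j}^{(j)}` for `m ≥ 1`. -/
noncomputable def vpoly {R : Type*} [CommRing R] [Algebra ℚ R]
    (b : ℕ) (U : Polynomial R) : ℕ → Polynomial R
  | 0 => U
  | m + 1 =>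
      -∑ j ∈ Finset.range (m + 1),
        Polynomial.C (algebraMap ℚ R (1 / ((j + 1).factorial : ℚ))) * U ^ (b * (j + 1)) *
          Polynomial.derivative^[j + 1] (vpoly b U (m - j))
  decreasing_by exact Nat.lt_succ_of_le (Nat.sub_le m j)

/-! ### Auxiliary lemmas -/

section Aux

private lemma descFactorial_pos' (l m : ℕ) : 0 < (l+m).descFactorial m :=
  Nat.pos_of_ne_zero (fun h => by have := Nat.descFactorial_eq_zero_iff_lt.mp h; omega)

private noncomputable def Tsum {S : Type*} [CommRing S] (g h : S[X]) (m k : ℕ) : S[X] :=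
  ∑ j ∈ Finset.range (m+1),
    ((-1:S[X])^j * (m.choose j : S[X])) * (g^j * Polynomial.derivative^[k] (g^(m-j) * h))

private lemma Tsum_succ {S : Type*} [CommRing S] (g h : S[X]) (m k : ℕ) :
    Tsum g h (m+1) k = Tsum g (g*h) m k - g * Tsum g h m k := by
  unfold Tsum
  conv_lhs => rw [Finset.sum_range_succ']
  conv_rhs => rw [Finset.sum_range_succ' _ m]
  rw [Finset.mul_sum, eq_sub_iff_add_eq, add_right_comm, ← Finset.sum_add_distrib]
  have key : ∀ i ∈ Finset.range (m+1),
      ((-1:S[X])^(i+1) * ((m+1).choose (i+1) : S[X])) * (g^(i+1) * derivative^[k] (g^(m+1-(i+1)) * h))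
      + g * (((-1:S[X])^i * (m.choose i : S[X])) * (g^i * derivative^[k] (g^(m-i) * h)))
      = ((-1:S[X])^(i+1) * (m.choose (i+1) : S[X])) * (g^(i+1) * derivative^[k] (g^(m-i) * h)) := by
    intro i hi
    have h1 : m + 1 - (i+1) = m - i := by omega
    rw [h1, Nat.choose_succ_succ]
    push_cast
    ring
  rw [Finset.sum_congr rfl key, Finset.sum_range_succ, Nat.choose_succ_self]
  have h1 : ∀ i ∈ Finset.range m,
      ((-1:S[X])^(i+1) * (m.choose (i+1) : S[X])) * (g^(i+1) * derivative^[k] (g^(m-i) * h))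
      = ((-1:S[X])^(i+1) * (m.choose (i+1) : S[X])) * (g^(i+1) * derivative^[k] (g^(m-(i+1)) * (g*h))) := by
    intro i hi
    rw [Finset.mem_range] at hi
    have : g^(m-(i+1)) * (g * h) = g^(m-i) * h := by
      rw [show m - i = m - (i+1) + 1 from by omega, pow_succ]
      ring
    rw [this]
  rw [Finset.sum_congr rfl h1]
  have h2 : g ^ (m - 0) * (g * h) = g ^ (m + 1 - 0) * h := by
    rw [show m + 1 - 0 = (m - 0) + 1 from by omega, pow_succ]
    ring
  rw [h2]
  simp

private lemma Tsum_mul {S : Type*} [CommRing S] (g h : S[X]) (m k : ℕ) :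
    Tsum g (g*h) m k
      = ∑ i ∈ Finset.range (k+1), (k.choose i) • ((derivative^[k-i] g) * Tsum g h m i) := by
  unfold Tsum
  have step : ∀ j ∈ Finset.range (m+1),
      ((-1:S[X])^j * (m.choose j : S[X])) * (g^j * derivative^[k] (g^(m-j) * (g*h)))
      = ∑ i ∈ Finset.range (k+1), (k.choose i) •
          ((derivative^[k-i] g) * (((-1:S[X])^j * (m.choose j : S[X])) * (g^j * derivative^[i] (g^(m-j) * h)))) := by
    intro j hj
    have hgh : g^(m-j) * (g*h) = g * (g^(m-j) * h) := by ring
    rw [hgh, Polynomial.iterate_derivative_mul]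
    simp only [Finset.mul_sum, mul_smul_comm]
    refine Finset.sum_congr rfl fun i hi => ?_
    congr 1
    ring
  rw [Finset.sum_congr rfl step, Finset.sum_comm]
  simp only [Finset.mul_sum, Finset.smul_sum]

private lemma Tsum_eq_zero {S : Type*} [CommRing S] (g : S[X]) (m : ℕ) :
    ∀ k, k < m → ∀ h : S[X], Tsum g h m k = 0 := by
  induction m with
  | zero => intro k hk; omega
  | succ m ih =>
    intro k hk h
    rw [Tsum_succ, Tsum_mul, Finset.sum_range_succ]
    rw [Nat.choose_self, Nat.sub_self, one_smul, Function.iterate_zero_apply]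
    have : ∑ i ∈ Finset.range k, (k.choose i) • ((derivative^[k-i] g) * Tsum g h m i) = 0 := by
      refine Finset.sum_eq_zero fun i hi => ?_
      rw [Finset.mem_range] at hi
      rw [ih i (by omega) h, mul_zero, smul_zero]
    rw [this, zero_add]
    ring

private lemma coeff_identity_abs (A B c x y : ℚ) (m j : ℕ)
    (hA : A ≠ 0) (hB : B ≠ 0) (hx : x ≠ 0) (hy : y ≠ 0) (hc : c ≠ 0)
    (hs : (-1:ℚ)^(m-j) = (-1)^m * (-1)^j) :
    1 / A * ((-1)^(m-j) / (B * x)) * x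
    = (-1)^(m+1) / ((c * A * B) * y) * y * ((-1)^(j+1) * c) := by
  rw [hs]
  field_simp
  ring

private lemma coeff_identity (b m j : ℕ) (hj : j ≤ m) :
    1 / ((j+1).factorial : ℚ) * ((-1)^(m-j) / (((m-j).factorial : ℚ) * ((b*(m-j)+1 : ℕ) : ℚ))) * ((b*(m-j)+1 : ℕ) : ℚ)
    = (-1)^(m+1) / (((m+1).factorial : ℚ) * ((b*(m+1)+1 : ℕ) : ℚ)) * ((b*(m+1)+1 : ℕ) : ℚ) * ((-1)^(j+1) * (((m+1).choose (j+1) : ℕ) : ℚ)) := by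
  have hch : (((m+1).choose (j+1) : ℚ)) * ((j+1).factorial : ℚ) * ((m-j).factorial : ℚ) = ((m+1).factorial : ℚ) := by
    have := Nat.choose_mul_factorial_mul_factorial (show j+1 ≤ m+1 by omega)
    rw [show m+1-(j+1) = m - j from by omega] at this
    exact_mod_cast congrArg (Nat.cast : ℕ → ℚ) this
  have hs : (-1:ℚ)^(m-j) = (-1)^m * (-1)^j := by
    rw [← pow_add, show m + j = (m-j) + 2*j from by omega, pow_add, pow_mul]
    norm_num
  have h1 : ((j+1).factorial : ℚ) ≠ 0 := Nat.cast_ne_zero.mpr (Nat.factorial_ne_zero _)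
  have h2 : ((m-j).factorial : ℚ) ≠ 0 := Nat.cast_ne_zero.mpr (Nat.factorial_ne_zero _)
  have h4 : ((b*(m-j)+1 : ℕ) : ℚ) ≠ 0 := Nat.cast_ne_zero.mpr (by omega)
  have h5 : ((b*(m+1)+1 : ℕ) : ℚ) ≠ 0 := Nat.cast_ne_zero.mpr (by omega)
  rw [← hch]
  have hc : (((m+1).choose (j+1) : ℕ) : ℚ) ≠ 0 :=
    Nat.cast_ne_zero.mpr (Nat.choose_pos (by omega : j+1 ≤ m+1)).ne'
  exact coeff_identity_abs _ _ _ _ _ m j h1 h2 h4 h5 hc hs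

private lemma Cq_merge {R : Type*} [CommRing R] [Algebra ℚ R] (q1 q2 q3 s : ℚ)
    (hq : q1 * q2 * q3 = s) (P Q : R[X]) :
    C (algebraMap ℚ R q1) * P * (C (algebraMap ℚ R q2) * (C (algebraMap ℚ R q3) * Q))
      = C (algebraMap ℚ R s) * (P * Q) := by
  subst hq; simp only [map_mul]; ring

private lemma Cq_intcast {R : Type*} [CommRing R] [Algebra ℚ R] (i c : ℕ) :
    ((-1:R[X])^i * ((c:ℕ) : R[X])) = C (algebraMap ℚ R ((-1)^i * (c:ℚ))) := by
  simp only [map_mul, map_pow, map_neg, map_one, map_natCast]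

private lemma iter_deriv_pow_succ {R : Type*} [CommRing R] (U : R[X]) (n m : ℕ) :
    derivative^[m+1] (U^(n+1))
      = C (((n+1 : ℕ) : R)) * derivative^[m] (U^n * derivative U) := by
  rw [Function.iterate_succ_apply, derivative_pow, Nat.add_sub_cancel, mul_assoc,
    Polynomial.iterate_derivative_C_mul]

private lemma vpoly_eq {R : Type*} [CommRing R] [Algebra ℚ R] (b : ℕ) (U : R[X]) (m : ℕ) :
    vpoly b U m
      = C (algebraMap ℚ R ((-1)^m / ((m.factorial : ℚ) * ((b*m+1 : ℕ) : ℚ))))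
          * derivative^[m] (U^(b*m+1)) := by
  induction m using Nat.strong_induction_on with
  | _ m ih =>
    match m with
    | 0 => simp [vpoly]
    | Nat.succ m =>
      rw [vpoly]
      -- rewrite each term
      have hstep : ∀ j ∈ Finset.range (m+1),
          C (algebraMap ℚ R (1 / ((j + 1).factorial : ℚ))) * U ^ (b * (j + 1)) *
            derivative^[j + 1] (vpoly b U (m - j))
          = C (algebraMap ℚ R
                ((-1)^(m+1) / (((m+1).factorial : ℚ) * ((b*(m+1)+1 : ℕ) : ℚ)) * ((b*(m+1)+1 : ℕ) : ℚ)
                  * ((-1)^(j+1) * (((m+1).choose (j+1) : ℕ) : ℚ))))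
              * (U ^ (b * (j + 1)) * derivative^[m] (U ^ (b * (m - j)) * derivative U)) := by
        intro j hj
        rw [Finset.mem_range] at hj
        rw [ih (m - j) (by omega), Polynomial.iterate_derivative_C_mul,
          ← Function.iterate_add_apply,
          show j + 1 + (m - j) = m + 1 from by omega,
          iter_deriv_pow_succ U (b*(m-j)) m,
          show ((C (((b*(m-j)+1 : ℕ) : R))) : R[X]) = C (algebraMap ℚ R ((b*(m-j)+1 : ℕ) : ℚ)) from by
            simp only [map_natCast]]
        exact Cq_merge _ _ _ _ (by rw [← coeff_identity b m j (by omega)]) _ _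
      rw [Finset.sum_congr rfl hstep]
      -- use the Tsum identity
      have hT := Tsum_eq_zero (U^b) (m+1) m (Nat.lt_succ_self m) (derivative U)
      unfold Tsum at hT
      rw [Finset.sum_range_succ'] at hT
      simp only [← pow_mul, Nat.succ_sub_succ_eq_sub, pow_zero, Nat.sub_zero, one_mul,
        Nat.choose_zero_right, Nat.cast_one, mul_one] at hT
      -- hT : ∑ i ∈ range (m+1), (-1)^(i+1) * choose * (U^(b*(i+1)) * D^m (U^(b*(m-i)) * U')) + D^m (U^(b*(m+1)) * U') = 0
      have hD : derivative^[m] (U ^ (b * (m+1)) * derivative U)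
          = -∑ i ∈ Finset.range (m+1),
              ((-1:R[X])^(i+1) * (((m+1).choose (i+1) : ℕ) : R[X]))
                * (U ^ (b*(i+1)) * derivative^[m] (U ^ (b*(m-i)) * derivative U)) := by
        rw [eq_neg_iff_add_eq_zero, add_comm]
        convert hT using 2
      rw [show b*(m+1)+1 = (b*(m+1)) + 1 from rfl, iter_deriv_pow_succ U (b*(m+1)) m,
        show ((C (((b*(m+1)+1 : ℕ) : R))) : R[X]) = C (algebraMap ℚ R ((b*(m+1)+1 : ℕ) : ℚ)) from by
          simp only [map_natCast],
        hD]
      simp only [Nat.succ_eq_add_one]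
      rw [mul_neg, mul_neg, neg_inj]
      simp only [Finset.mul_sum]
      refine Finset.sum_congr rfl fun i hi => ?_
      rw [Cq_intcast (i+1) ((m+1).choose (i+1))]
      simp only [map_mul]
      ring

private lemma u_last (a : ℕ) : u a a = LaurentPolynomial.T 1 := by
  simp [u]

private lemma u_last_ne_zero (a : ℕ) : u a a ≠ 0 := by
  rw [u_last]; exact (LaurentPolynomial.isUnit_T 1).ne_zero

private lemma Upoly_coeff (a i : ℕ) : (Upoly a).coeff i = if i ≤ a then u a i else 0 := by
  rw [Upoly, Polynomial.finset_sum_coeff]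
  simp only [Polynomial.coeff_C_mul, Polynomial.coeff_X_pow]
  rw [Finset.sum_congr rfl (fun j _ => by rw [mul_ite, mul_one, mul_zero])]
  rw [Finset.sum_ite_eq (Finset.range (a+1)) i (u a)]
  simp [Nat.lt_succ_iff]

private lemma Upoly_natDegree (a : ℕ) : (Upoly a).natDegree = a := by
  refine le_antisymm ?_ (Polynomial.le_natDegree_of_ne_zero ?_)
  · rw [Polynomial.natDegree_le_iff_coeff_eq_zero]
    intro i hi
    rw [Upoly_coeff, if_neg (by omega)]
  · rw [Upoly_coeff, if_pos le_rfl]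
    exact u_last_ne_zero a

private lemma Upoly_pow_coeff_top (a N : ℕ) : (Upoly a ^ N).coeff (a * N) = (u a a) ^ N := by
  have := Polynomial.coeff_pow_mul_natDegree (Upoly a) N
  rw [Upoly_natDegree] at this
  rw [mul_comm a N, this, Polynomial.leadingCoeff, Upoly_natDegree, Upoly_coeff, if_pos le_rfl]

private lemma Upoly_pow_natDegree (a N : ℕ) : (Upoly a ^ N).natDegree = a * N := by
  rw [Polynomial.natDegree_pow, Upoly_natDegree, mul_comm]

private lemma Upoly_pow_coeff_mem (a N k : ℕ) (hk : k ≤ a) :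
    ∀ l, a * N ≤ l + k →
      (Upoly a ^ N).coeff l ∈ Algebra.adjoin ℂ (u a '' {i : ℕ | a ≤ i + k ∧ i ≤ a}) := by
  induction N with
  | zero =>
    intro l _
    rw [pow_zero, Polynomial.coeff_one]
    split_ifs
    exacts [Subalgebra.one_mem _, Subalgebra.zero_mem _]
  | succ N ih =>
    intro l hl
    have hmul : a*(N+1) = a*N + a := by ring
    rw [pow_succ, Polynomial.coeff_mul]
    refine Subalgebra.sum_mem _ fun p hp => ?_
    rw [Finset.HasAntidiagonal.mem_antidiagonal] at hp
    by_cases hj : p.2 ≤ a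
    · by_cases hjk : a ≤ p.2 + k
      · refine Subalgebra.mul_mem _ (ih p.1 (by omega)) ?_
        rw [Upoly_coeff, if_pos hj]
        exact Algebra.subset_adjoin ⟨p.2, ⟨hjk, hj⟩, rfl⟩
      · have : (Upoly a ^ N).coeff p.1 = 0 := by
          apply Polynomial.coeff_eq_zero_of_natDegree_lt
          rw [Upoly_pow_natDegree]
          omega
        rw [this, zero_mul]
        exact Subalgebra.zero_mem _
    · rw [Upoly_coeff, if_neg hj, mul_zero]
      exact Subalgebra.zero_mem _

private lemma Upoly_pow_coeff_eq (a : ℕ) (ha : 1 ≤ a) (k : ℕ) (hk1 : 1 ≤ k) (hk : k ≤ a) :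
    ∀ N, 1 ≤ N →
    ∃ Q ∈ Algebra.adjoin ℂ (u a '' {i : ℕ | a + 1 ≤ i + k ∧ i ≤ a}),
      (Upoly a ^ N).coeff (a * N - k)
        = (N : LaurentRing a) * ((u a a) ^ (N - 1) * u a (a - k)) + Q := by
  refine Nat.le_induction ?_ ?_
  · refine ⟨0, Subalgebra.zero_mem _, ?_⟩
    rw [pow_one, mul_one, Upoly_coeff, if_pos (by omega)]
    simp
  · intro N hN ih
    obtain ⟨Q, hQ, hc⟩ := ih
    have hmul : a*(N+1) = a*N + a := by ring
    have haN : a ≤ a * N := Nat.le_mul_of_pos_right a hN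
    have hx1 : ((a*N - k, a) : ℕ × ℕ) ∈ Finset.HasAntidiagonal.antidiagonal (a*(N+1) - k) := by
      rw [Finset.HasAntidiagonal.mem_antidiagonal]; omega
    have hx2 : ((a*N, a - k) : ℕ × ℕ) ∈ (Finset.HasAntidiagonal.antidiagonal (a*(N+1) - k)).erase (a*N - k, a) := by
      rw [Finset.mem_erase, Finset.HasAntidiagonal.mem_antidiagonal]
      constructor
      · simp only [ne_eq, Prod.mk.injEq, not_and]
        intro h; omega
      · omega
    rw [pow_succ, Polynomial.coeff_mul, ← Finset.add_sum_erase _ _ hx1,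
      ← Finset.add_sum_erase _ _ hx2]
    have hua : u a a ∈ Algebra.adjoin ℂ (u a '' {i : ℕ | a + 1 ≤ i + k ∧ i ≤ a}) :=
      Algebra.subset_adjoin ⟨a, ⟨by omega, le_rfl⟩, rfl⟩
    have hrest : ∑ p ∈ (((Finset.HasAntidiagonal.antidiagonal (a*(N+1) - k)).erase (a*N - k, a)).erase (a*N, a-k)),
        (Upoly a ^ N).coeff p.1 * (Upoly a).coeff p.2
        ∈ Algebra.adjoin ℂ (u a '' {i : ℕ | a + 1 ≤ i + k ∧ i ≤ a}) := by
      refine Subalgebra.sum_mem _ fun p hp => ?_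
      rw [Finset.mem_erase, Finset.mem_erase, Finset.HasAntidiagonal.mem_antidiagonal] at hp
      obtain ⟨hne2, hne1, hsum⟩ := hp
      by_cases hj : p.2 ≤ a
      · by_cases hjk : a + 1 ≤ p.2 + k
        · have hp2a : p.2 < a := by
            rcases Nat.lt_or_ge p.2 a with h | h
            · exact h
            · exfalso; apply hne1; have : p.2 = a := by omega
              rw [Prod.ext_iff]; constructor <;> simp <;> omega
          refine Subalgebra.mul_mem _ ?_ ?_
          · have := Upoly_pow_coeff_mem a N (p.2 + k - a) (by omega) p.1 (by omega)
            refine Algebra.adjoin_mono (Set.image_mono ?_) this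
            intro i hi
            simp only [Set.mem_setOf_eq] at hi ⊢
            omega
          · rw [Upoly_coeff, if_pos hj]
            exact Algebra.subset_adjoin ⟨p.2, ⟨hjk, hj⟩, rfl⟩
        · by_cases hjk2 : p.2 + k = a
          · exfalso; apply hne2
            have h1 : p.2 = a - k := by omega
            have h2 : p.1 = a * N := by omega
            rw [Prod.ext_iff]; exact ⟨h2, h1⟩
          · have : (Upoly a ^ N).coeff p.1 = 0 := by
              apply Polynomial.coeff_eq_zero_of_natDegree_lt
              rw [Upoly_pow_natDegree]
              omega
            rw [this, zero_mul]
            exact Subalgebra.zero_mem _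
      · rw [Upoly_coeff, if_neg hj, mul_zero]
        exact Subalgebra.zero_mem _
    refine ⟨Q * u a a + ∑ p ∈ (((Finset.HasAntidiagonal.antidiagonal (a*(N+1) - k)).erase (a*N - k, a)).erase (a*N, a-k)),
        (Upoly a ^ N).coeff p.1 * (Upoly a).coeff p.2,
      Subalgebra.add_mem _ (Subalgebra.mul_mem _ hQ hua) hrest, ?_⟩
    rw [hc, Upoly_pow_coeff_top, Upoly_coeff a a, if_pos le_rfl, Upoly_coeff a (a-k),
      if_pos (by omega)]
    have hpow : (u a a)^(N-1) * u a a = (u a a)^N := by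
      rw [← pow_succ]; congr 1; omega
    push_cast
    linear_combination (N : LaurentRing a) * u a (a - k) * hpow

end Aux

/-- for `a, b ≥ 2` and every `m ≥ 0`, the polynomial `(−1)^m·m!·v_m(Y)` is
`(bm+1)`-triangular of degree `(ab−1)m + a`. -/
theorem vpoly_isTriangular (a b : ℕ) (ha : 2 ≤ a) (hb : 2 ≤ b) (m : ℕ) :
    IsTriangular a (b * m + 1) ((a * b - 1) * m + a)
      (((-1 : ℤ) ^ m * (m.factorial : ℤ)) • vpoly b (Upoly a) m) := by
  set R := LaurentRing a with hR
  set N := b * m + 1 with hN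
  set d := (a * b - 1) * m + a with hd
  have hab : 4 ≤ a * b := by calc 4 = 2*2 := rfl
                                 _ ≤ a * b := Nat.mul_le_mul ha hb
  have habm : m ≤ a*b*m := Nat.le_mul_of_pos_left m (by omega)
  have had : a * N = d + m := by
    have h1 : a * N = a*b*m + a := by rw [hN]; ring
    have h2 : (a*b-1)*m = a*b*m - m := by rw [Nat.sub_mul, one_mul]
    omega
  have hNq : ((N:ℕ):ℚ) ≠ 0 := Nat.cast_ne_zero.mpr (by omega)
  have hP : ((-1 : ℤ) ^ m * (m.factorial : ℤ)) • vpoly b (Upoly a) m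
      = C (algebraMap ℚ R (1/((N:ℕ):ℚ))) * derivative^[m] (Upoly a ^ N) := by
    rw [vpoly_eq, zsmul_eq_mul,
      ← Polynomial.C_eq_intCast,
      show ((((-1 : ℤ) ^ m * (m.factorial : ℤ) : ℤ)) : R)
          = algebraMap ℚ R (((-1 : ℤ) ^ m * (m.factorial : ℤ) : ℤ) : ℚ)
        from (map_intCast (algebraMap ℚ R) _).symm,
      ← mul_assoc, ← map_mul, ← map_mul]
    have hm : ((m.factorial : ℕ):ℚ) ≠ 0 := Nat.cast_ne_zero.mpr (Nat.factorial_ne_zero _)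
    have hsq : ((-1:ℚ))^m * (-1)^m = 1 := by
      rw [← pow_add, show m + m = 2*m from by omega, pow_mul]
      norm_num
    have hb1 : ((b*m+1 : ℕ):ℚ) ≠ 0 := Nat.cast_ne_zero.mpr (by omega)
    have hq : ((((-1 : ℤ) ^ m * (m.factorial : ℤ) : ℤ)) : ℚ) *
        ((-1)^m / ((m.factorial : ℚ) * ((b*m+1 : ℕ) : ℚ))) = 1/((N:ℕ):ℚ) := by
      rw [show ((N:ℕ):ℚ) = ((b*m+1 : ℕ):ℚ) from by rw [hN]]
      have hb2 : ((b:ℚ)*(m:ℚ)+1) ≠ 0 := by positivity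
      push_cast
      field_simp
      linear_combination hsq
    rw [hq]
  rw [hP]
  have hcoeff : ∀ l, (C (algebraMap ℚ R (1/((N:ℕ):ℚ))) * derivative^[m] (Upoly a ^ N)).coeff l
      = algebraMap ℚ R ((((l+m).descFactorial m : ℕ) : ℚ)/((N:ℕ):ℚ)) * (Upoly a ^ N).coeff (l+m) := by
    intro l
    rw [Polynomial.coeff_C_mul, Polynomial.coeff_iterate_derivative, nsmul_eq_mul]
    rw [show ((((l+m).descFactorial m : ℕ)) : R) = algebraMap ℚ R ((((l+m).descFactorial m : ℕ)) : ℚ)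
      from by simp only [map_natCast]]
    rw [← mul_assoc, ← map_mul, one_div, inv_mul_eq_div]
  refine ⟨?_, by omega, ?_, ?_⟩
  · -- natDegree = d
    refine le_antisymm ?_ (Polynomial.le_natDegree_of_ne_zero ?_)
    · refine (Polynomial.natDegree_C_mul_le _ _).trans ?_
      refine (Polynomial.natDegree_iterate_derivative _ m).trans ?_
      rw [Upoly_pow_natDegree]
      omega
    · have htop : (Upoly a ^ N).coeff (d + m) = u a a ^ N := by
        rw [← had]; exact Upoly_pow_coeff_top a N
      rw [hcoeff d, htop]
      apply mul_ne_zero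
      · have h2 : ((((d+m).descFactorial m : ℕ) : ℚ)/((N:ℕ):ℚ)) ≠ 0 := by
          apply div_ne_zero _ hNq
          exact_mod_cast (descFactorial_pos' d m).ne'
        intro h
        exact h2 (RingHom.injective (algebraMap ℚ R) (by rw [h, map_zero]))
      · exact pow_ne_zero _ (u_last_ne_zero a)
  · -- top coefficient
    refine ⟨(((d+m).descFactorial m : ℕ) : ℚ)/((N:ℕ):ℚ), ?_, ?_⟩
    · apply div_pos
      · exact_mod_cast descFactorial_pos' d m
      · exact_mod_cast (by omega : 0 < N)
    · have htop : (Upoly a ^ N).coeff (d + m) = u a a ^ N := by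
        rw [← had]; exact Upoly_pow_coeff_top a N
      rw [hcoeff d, htop]
  · -- lower coefficients
    intro l hl1 hl2
    have hk1 : 1 ≤ d - l := by omega
    have hk2 : d - l ≤ a := by omega
    have hlm : l + m = a*N - (d - l) := by omega
    obtain ⟨Q, hQ, hc⟩ := Upoly_pow_coeff_eq a (by omega) (d - l) hk1 hk2 N (by omega)
    refine ⟨(((l+m).descFactorial m : ℕ) : ℚ),
      algebraMap ℚ R ((((l+m).descFactorial m : ℕ) : ℚ)/((N:ℕ):ℚ)) * Q, ?_, ?_, ?_⟩
    · exact_mod_cast descFactorial_pos' l m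
    · have halg : (algebraMap ℚ R) ((((l+m).descFactorial m : ℕ) : ℚ)/((N:ℕ):ℚ))
          = algebraMap ℂ R ((((((l+m).descFactorial m : ℕ) : ℚ)/((N:ℕ):ℚ) : ℚ)) : ℂ) := by
        rw [IsScalarTower.algebraMap_apply ℚ ℂ R]
        norm_cast
      have hsets : {i : ℕ | a + 1 ≤ i + (d - l) ∧ i ≤ a}
          = {i : ℕ | a - (d - l) + 1 ≤ i ∧ i ≤ a} := by
        ext i
        simp only [Set.mem_setOf_eq]
        omega
      have hset : (u a '' {i : ℕ | a + 1 ≤ i + (d - l) ∧ i ≤ a})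
          = (u a '' {i : ℕ | a - (d - l) + 1 ≤ i ∧ i ≤ a}) := by rw [hsets]
      rw [halg, ← hset]
      exact Subalgebra.mul_mem _ (Subalgebra.algebraMap_mem _ _) hQ
    · rw [hcoeff l, hlm, hc, mul_add]
      rw [add_left_inj]
      rw [show ((N:ℕ) : R) = algebraMap ℚ R ((N:ℕ):ℚ) from (map_natCast (algebraMap ℚ R) N).symm,
        ← mul_assoc, ← map_mul, div_mul_cancel₀ _ hNq]
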